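/- For n ≥ 2 and x ≥ 1, the function φ(x) = 1/(n + 1 + sin x) satisfies (φ''(x) − V'(x)φ'(x) − V''(x)φ(x)) ≤ M₁ for some constant M₁ > 0, where V'(x) = x^n(n+1+sin x). -/

import Mathlib

open Real Set

theorem phi_condition_bounded (n : ℕ) (hn : 2 ≤ n)
    (φ : ℝ → ℝ) (hφ : ∀ x, φ x = 1 / ((n : ℝ) + 1 + Real.sin x)) :
    ∃ M₁ : ℝ, 0 < M₁ ∧ ∀ x : ℝ, 1 ≤ x →
      deriv (deriv φ) x - (x ^ n * ((n : ℝ) + 1 + Real.sin x)) * deriv φ x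
        - ((n : ℝ) * x ^ (n - 1) * ((n : ℝ) + 1 + Real.sin x) + x ^ n * Real.cos x) * φ x
      ≤ M₁ := by
  set c : ℝ := (n : ℝ) + 1 with hc
  have hn2 : (2 : ℝ) ≤ (n : ℝ) := by exact_mod_cast hn
  have hd : ∀ x : ℝ, 0 < c + Real.sin x := by
    intro x
    have := Real.neg_one_le_sin x
    simp only [hc]; linarith
  have hφe : φ = fun y => (c + Real.sin y)⁻¹ := by
    funext y; rw [hφ y, one_div]
  have hden : ∀ x : ℝ, HasDerivAt (fun y => c + Real.sin y) (Real.cos x) x :=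
    fun x => (Real.hasDerivAt_sin x).const_add c
  have hφ' : ∀ x : ℝ, HasDerivAt φ (-(Real.cos x) / (c + Real.sin x) ^ 2) x := by
    intro x
    rw [hφe]
    exact (hden x).inv (hd x).ne'
  have hderiv1 : deriv φ = fun x => -(Real.cos x) / (c + Real.sin x) ^ 2 :=
    funext fun x => (hφ' x).deriv
  have hφ'' : ∀ x : ℝ, HasDerivAt (deriv φ)
      ((Real.sin x * (c + Real.sin x) ^ 2 -
        -(Real.cos x) * (2 * (c + Real.sin x) ^ 1 * Real.cos x)) /
        ((c + Real.sin x) ^ 2) ^ 2) x := by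
    intro x
    rw [hderiv1]
    have hnum : HasDerivAt (fun y => -(Real.cos y)) (Real.sin x) x := by
      exact (Real.hasDerivAt_cos x).neg.congr_deriv (by simp)
    have hdpow : HasDerivAt (fun y => (c + Real.sin y) ^ 2)
        (2 * (c + Real.sin x) ^ 1 * Real.cos x) x := by
      exact ((hden x).pow 2).congr_deriv (by norm_num)
    exact hnum.div hdpow (pow_ne_zero 2 (hd x).ne')
  refine ⟨(n : ℝ) + 4, by linarith, fun x hx => ?_⟩
  rw [(hφ'' x).deriv, hderiv1, hφ x]
  set d : ℝ := c + Real.sin x with hdd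
  have hdpos : 0 < d := hd x
  have hd2 : (2 : ℝ) ≤ d := by
    have := Real.neg_one_le_sin x
    simp only [hdd, hc]; linarith
  have hdle : d ≤ (n : ℝ) + 2 := by
    have := Real.sin_le_one x
    simp only [hdd, hc]; linarith
  have hE : (Real.sin x * d ^ 2 - -(Real.cos x) * (2 * d ^ 1 * Real.cos x)) / (d ^ 2) ^ 2
      - (x ^ n * d) * (-(Real.cos x) / d ^ 2)
      - ((n : ℝ) * x ^ (n - 1) * d + x ^ n * Real.cos x) * (1 / d)
      = (Real.sin x * d + 2 * (Real.cos x) ^ 2) / d ^ 3 - (n : ℝ) * x ^ (n - 1) := by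
    field_simp
    ring
  rw [hE]
  have hxp : (0 : ℝ) ≤ (n : ℝ) * x ^ (n - 1) := by positivity
  have hd3 : (8 : ℝ) ≤ d ^ 3 := by nlinarith [sq_nonneg (d - 2), sq_nonneg d]
  have h1 : (Real.sin x * d + 2 * (Real.cos x) ^ 2) / d ^ 3 ≤ (n : ℝ) + 4 := by
    rw [div_le_iff₀ (by positivity)]
    have hs : Real.sin x ≤ 1 := Real.sin_le_one x
    have hcs : (Real.cos x) ^ 2 ≤ 1 := Real.cos_sq_le_one x
    have hsn : -1 ≤ Real.sin x := Real.neg_one_le_sin x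
    nlinarith [mul_le_mul_of_nonneg_right hs hdpos.le,
      mul_le_mul_of_nonneg_left hd3 (by linarith : (0:ℝ) ≤ (n:ℝ) + 4)]
  linarith
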